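/- arXiv:2007.13636 — 2 statements merged into one kernel-verified Lean document; each statement's English description precedes it below -/
import Mathlib

section
/- Define C(n,k,x) := Σ_{j=0}^{min(n,k)} j! · (x+1)^{(j)} · S(n+1, j+1) · S(k+1, j+1). Then for all integers n, k ≥ 0, Σ_{ℓ=0}^{n} c(n+1, ℓ+1) · C(ℓ, k, x) = n! · Σ_{j=0}^{min(n,k)} (x+1)^{(j)} · S(k+1, j+1) · binom(n+1, j+1), as polynomials in x. -/
open Finset

/-- Stirling numbers of the second kind. -/
def stirling2 : ℕ → ℕ → ℕ
  | 0, 0 => 1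
  | 0, _ + 1 => 0
  | _ + 1, 0 => 0
  | n + 1, k + 1 => (k + 1) * stirling2 n (k + 1) + stirling2 n k

/-- Unsigned Stirling numbers of the first kind. -/
def stirling1 : ℕ → ℕ → ℕ
  | 0, 0 => 1
  | 0, _ + 1 => 0
  | _ + 1, 0 => 0
  | n + 1, k + 1 => n * stirling1 n (k + 1) + stirling1 n k

/-- The Callan polynomial, evaluated at x : ℚ. -/
def callan (n k : ℕ) (x : ℚ) : ℚ :=
  ∑ j ∈ Finset.range (min n k + 1),
    (j.factorial : ℚ) * (∏ i ∈ Finset.range j, (x + 1 + i)) *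
      stirling2 (n + 1) (j + 1) * stirling2 (k + 1) (j + 1)

lemma stirling2_eq_zero : ∀ {n k : ℕ}, n < k → stirling2 n k = 0
  | 0, _ + 1, _ => rfl
  | n + 1, k + 1, h => by
    rw [stirling2, stirling2_eq_zero (by omega), stirling2_eq_zero (by omega)]; simp

lemma stirling1_eq_zero : ∀ {n k : ℕ}, n < k → stirling1 n k = 0
  | 0, _ + 1, _ => rfl
  | n + 1, k + 1, h => by
    rw [stirling1, stirling1_eq_zero (by omega), stirling1_eq_zero (by omega)]; simp

/-- The "Lah-type" sum `∑_l c(n+1,l+1) S(l+1,j+1)`. -/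
def lahSum (n j : ℕ) : ℚ :=
  ∑ l ∈ range (n+1), (stirling1 (n+1) (l+1) : ℚ) * stirling2 (l+1) (j+1)

lemma lahSum_succ (n j : ℕ) :
    lahSum (n+1) (j+1) = ((n:ℚ)+j+3) * lahSum n (j+1) + lahSum n j := by
  unfold lahSum
  calc ∑ l ∈ range (n+1+1), (stirling1 (n+1+1) (l+1) : ℚ) * stirling2 (l+1) (j+1+1)
      = ∑ l ∈ range (n+2), (((n:ℚ)+1) * stirling1 (n+1) (l+1) * stirling2 (l+1) (j+2)
          + (stirling1 (n+1) l : ℚ) * stirling2 (l+1) (j+2)) := by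
        refine Finset.sum_congr rfl fun l _ => ?_
        have : stirling1 (n+2) (l+1) = (n+1) * stirling1 (n+1) (l+1) + stirling1 (n+1) l := rfl
        rw [show n+1+1 = n+2 from rfl, show j+1+1 = j+2 from rfl, this]
        push_cast; ring
    _ = ((n:ℚ)+1) * ∑ l ∈ range (n+2), (stirling1 (n+1) (l+1) : ℚ) * stirling2 (l+1) (j+2)
          + ∑ l ∈ range (n+2), (stirling1 (n+1) l : ℚ) * stirling2 (l+1) (j+2) := by
        rw [Finset.sum_add_distrib, Finset.mul_sum]
        refine congrArg₂ _ (Finset.sum_congr rfl fun l _ => by ring) rfl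
    _ = ((n:ℚ)+1) * ∑ l ∈ range (n+1), (stirling1 (n+1) (l+1) : ℚ) * stirling2 (l+1) (j+2)
          + ∑ m ∈ range (n+1), (stirling1 (n+1) (m+1) : ℚ) * stirling2 (m+2) (j+2) := by
        have e2 : ∑ l ∈ range (n+2), (stirling1 (n+1) l : ℚ) * stirling2 (l+1) (j+2)
            = ∑ m ∈ range (n+1), (stirling1 (n+1) (m+1) : ℚ) * stirling2 (m+2) (j+2) := by
          rw [Finset.sum_range_succ']
          simp [show stirling1 (n+1) 0 = 0 from rfl]
        rw [e2, Finset.sum_range_succ (n := n+1), stirling1_eq_zero (show n+1 < n+1+1 by omega)]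
        simp
    _ = ((n:ℚ)+1) * ∑ l ∈ range (n+1), (stirling1 (n+1) (l+1) : ℚ) * stirling2 (l+1) (j+2)
          + (((j:ℚ)+2) * ∑ m ∈ range (n+1), (stirling1 (n+1) (m+1) : ℚ) * stirling2 (m+1) (j+2)
             + ∑ m ∈ range (n+1), (stirling1 (n+1) (m+1) : ℚ) * stirling2 (m+1) (j+1)) := by
        congr 1
        rw [Finset.mul_sum, ← Finset.sum_add_distrib]
        refine Finset.sum_congr rfl fun m _ => ?_
        have : stirling2 (m+2) (j+2) = (j+2) * stirling2 (m+1) (j+2) + stirling2 (m+1) (j+1) := rfl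
        rw [this]; push_cast; ring
    _ = ((n:ℚ)+j+3) * ∑ l ∈ range (n+1), (stirling1 (n+1) (l+1) : ℚ) * stirling2 (l+1) (j+1+1)
          + ∑ l ∈ range (n+1), (stirling1 (n+1) (l+1) : ℚ) * stirling2 (l+1) (j+1) := by
        rw [show j+1+1 = j+2 from rfl]; ring

lemma lahSum_zero (n : ℕ) : lahSum (n+1) 0 = ((n:ℚ)+2) * lahSum n 0 := by
  unfold lahSum
  calc ∑ l ∈ range (n+1+1), (stirling1 (n+1+1) (l+1) : ℚ) * stirling2 (l+1) (0+1)
      = ∑ l ∈ range (n+2), (((n:ℚ)+1) * stirling1 (n+1) (l+1) * stirling2 (l+1) 1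
          + (stirling1 (n+1) l : ℚ) * stirling2 (l+1) 1) := by
        refine Finset.sum_congr rfl fun l _ => ?_
        have : stirling1 (n+2) (l+1) = (n+1) * stirling1 (n+1) (l+1) + stirling1 (n+1) l := rfl
        rw [show n+1+1 = n+2 from rfl, this]
        push_cast; ring
    _ = ((n:ℚ)+1) * ∑ l ∈ range (n+2), (stirling1 (n+1) (l+1) : ℚ) * stirling2 (l+1) 1
          + ∑ l ∈ range (n+2), (stirling1 (n+1) l : ℚ) * stirling2 (l+1) 1 := by
        rw [Finset.sum_add_distrib, Finset.mul_sum]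
        refine congrArg₂ _ (Finset.sum_congr rfl fun l _ => by ring) rfl
    _ = ((n:ℚ)+1) * ∑ l ∈ range (n+1), (stirling1 (n+1) (l+1) : ℚ) * stirling2 (l+1) 1
          + ∑ m ∈ range (n+1), (stirling1 (n+1) (m+1) : ℚ) * stirling2 (m+2) 1 := by
        have e2 : ∑ l ∈ range (n+2), (stirling1 (n+1) l : ℚ) * stirling2 (l+1) 1
            = ∑ m ∈ range (n+1), (stirling1 (n+1) (m+1) : ℚ) * stirling2 (m+2) 1 := by
          rw [Finset.sum_range_succ']
          simp [show stirling1 (n+1) 0 = 0 from rfl]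
        rw [e2, Finset.sum_range_succ (n := n+1), stirling1_eq_zero (show n+1 < n+1+1 by omega)]
        simp
    _ = ((n:ℚ)+2) * ∑ l ∈ range (n+1), (stirling1 (n+1) (l+1) : ℚ) * stirling2 (l+1) (0+1) := by
        have h : ∀ m : ℕ, stirling2 (m+2) 1 = stirling2 (m+1) 1 := by
          intro m
          have : stirling2 (m+2) 1 = 1 * stirling2 (m+1) 1 + stirling2 (m+1) 0 := rfl
          rw [this, show stirling2 (m+1) 0 = 0 from rfl]; ring
        simp only [h]
        norm_num
        ring

lemma lahSum_base (j : ℕ) : lahSum 0 j = if j = 0 then 1 else 0 := by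
  unfold lahSum
  rw [Finset.sum_range_one]
  cases j with
  | zero => norm_num [show stirling1 1 1 = 1 from rfl, show stirling2 1 1 = 1 from rfl]
  | succ j =>
    rw [stirling2_eq_zero (show 0+1 < j+1+1 by omega)]
    simp

lemma choose_helper (n k : ℕ) :
    ((k:ℚ)+2) * (n+1).choose (k+2) = ((n:ℚ) - k) * (n+1).choose (k+1) := by
  rcases le_or_gt k n with h | h
  · have hnat := Nat.choose_succ_right_eq (n+1) (k+1)
    have hsub : n + 1 - (k + 1) = n - k := by omega
    rw [hsub] at hnat
    have := congrArg (fun m : ℕ => (m : ℚ)) hnat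
    push_cast [Nat.cast_sub h] at this
    linarith [this]
  · rw [Nat.choose_eq_zero_of_lt (by omega), Nat.choose_eq_zero_of_lt (by omega)]
    simp

lemma lahSum_eq (n : ℕ) : ∀ j : ℕ,
    lahSum n j * j.factorial = n.factorial * (n+1).choose (j+1) := by
  induction n with
  | zero =>
    intro j
    rw [lahSum_base]
    cases j with
    | zero => simp
    | succ j =>
      rw [Nat.choose_eq_zero_of_lt (by omega : 1 < j + 1 + 1)]
      simp
  | succ n ih =>
    intro j
    cases j with
    | zero =>
      rw [lahSum_zero]
      have h0 := ih 0
      push_cast [Nat.factorial_succ, Nat.choose_one_right] at h0 ⊢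
      nlinarith [h0]
    | succ j =>
      rw [lahSum_succ]
      have ih1 := ih (j+1)
      have ih2 := ih j
      have hch := choose_helper n j
      have hp : ((n+2).choose (j+2) : ℚ) = (n+1).choose (j+1) + (n+1).choose (j+2) := by
        rw [show (n+2).choose (j+2) = (n+1).choose (j+1) + (n+1).choose (j+2) from
          Nat.choose_succ_succ (n+1) (j+1)]
        push_cast; ring
      rw [hp]
      push_cast [Nat.factorial_succ] at ih1 ih2 ⊢
      nlinarith [ih1, ih2, hch]

theorem stmt6 (n k : ℕ) (x : ℚ) :
    ∑ l ∈ Finset.range (n + 1), (stirling1 (n + 1) (l + 1) : ℚ) * callan l k x =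
      (n.factorial : ℚ) *
        ∑ j ∈ Finset.range (min n k + 1),
          (∏ i ∈ Finset.range j, (x + 1 + i)) * stirling2 (k + 1) (j + 1) *
            ((n + 1).choose (j + 1)) := by
  have step1 : ∀ l ∈ range (n+1), (stirling1 (n+1) (l+1) : ℚ) * callan l k x
      = ∑ j ∈ range (min n k + 1), (stirling1 (n+1) (l+1) : ℚ) *
          ((j.factorial : ℚ) * (∏ i ∈ range j, (x + 1 + i)) *
            stirling2 (l + 1) (j + 1) * stirling2 (k + 1) (j + 1)) := by
    intro l hl
    have hln : l ≤ n := by simpa [Nat.lt_succ_iff] using hl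
    rw [callan, Finset.mul_sum]
    apply Finset.sum_subset
    · apply Finset.range_subset_range.2
      omega
    · intro j hj hj2
      have h1 : j ≤ min n k := by simpa [Nat.lt_succ_iff] using hj
      have h2 : ¬ j < min l k + 1 := fun hc => hj2 (Finset.mem_range.2 hc)
      rw [stirling2_eq_zero (show l + 1 < j + 1 by omega)]
      ring_nf
  rw [Finset.sum_congr rfl step1, Finset.sum_comm, Finset.mul_sum]
  refine Finset.sum_congr rfl fun j _ => ?_
  have key := lahSum_eq n j
  unfold lahSum at key
  have hfac : (j.factorial : ℚ) ≠ 0 := Nat.cast_ne_zero.2 j.factorial_ne_zero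
  calc ∑ l ∈ range (n+1), (stirling1 (n+1) (l+1) : ℚ) *
          ((j.factorial : ℚ) * (∏ i ∈ range j, (x + 1 + i)) *
            stirling2 (l + 1) (j + 1) * stirling2 (k + 1) (j + 1))
      = ((j.factorial : ℚ) * (∏ i ∈ range j, (x + 1 + i)) * stirling2 (k + 1) (j + 1)) *
          ∑ l ∈ range (n+1), (stirling1 (n+1) (l+1) : ℚ) * stirling2 (l+1) (j+1) := by
        rw [Finset.mul_sum]
        exact Finset.sum_congr rfl fun l _ => by ring
    _ = (n.factorial : ℚ) * ((∏ i ∈ range j, (x + 1 + i)) * stirling2 (k + 1) (j + 1) *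
          ((n + 1).choose (j + 1))) := by
        have : (∑ l ∈ range (n+1), (stirling1 (n+1) (l+1) : ℚ) * stirling2 (l+1) (j+1))
            = (n.factorial : ℚ) * (n+1).choose (j+1) / j.factorial := by
          field_simp
          linarith [key]
        rw [this]
        field_simp
end

section
/- Define C(k, -1, x) := (1/(k+1)!) · Σ_{ℓ=0}^{k} (-1)^ℓ · c(k+2, ℓ+2) · C(k, ℓ, x), where C(n,k,x) = Σ_{j=0}^{min(n,k)} j! (x+1)^{(j)} S(n+1,j+1) S(k+1,j+1). Then x · C(k, -1, -x) = Σ_{j=0}^{k} (-1)^{j+1} (-x)^{(j+1)} S(k+1, j+1) / (j+1), as polynomials in x with rational coefficients. -/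
open Finset

/-- The extension C(k, -1, x). -/
def callanNeg (k : ℕ) (x : ℚ) : ℚ :=
  (1 / ((k + 1).factorial : ℚ)) *
    ∑ l ∈ Finset.range (k + 1), (-1 : ℚ) ^ l * stirling1 (k + 2) (l + 2) * callan k l x

lemma stirling2_lt : ∀ n k, n < k → stirling2 n k = 0
  | 0, _+1, _ => rfl
  | n+1, k+1, h => by
      simp only [stirling2]
      rw [stirling2_lt n (k+1) (by omega), stirling2_lt n k (by omega)]
      ring

lemma stirling1_lt : ∀ n k, n < k → stirling1 n k = 0
  | 0, _+1, _ => rfl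
  | n+1, k+1, h => by
      simp only [stirling1]
      rw [stirling1_lt n (k+1) (by omega), stirling1_lt n k (by omega)]
      ring

lemma stirling2_self : ∀ n, stirling2 n n = 1
  | 0 => rfl
  | n+1 => by
      simp only [stirling2]
      rw [stirling2_lt n (n+1) (by omega), stirling2_self n]
      ring

lemma stirling1_self : ∀ n, stirling1 n n = 1
  | 0 => rfl
  | n+1 => by
      simp only [stirling1]
      rw [stirling1_lt n (n+1) (by omega), stirling1_self n]
      ring

/-- Orthogonality of Stirling numbers. -/
lemma Vlem : ∀ n, ∀ r, (∑ m ∈ range (n+1), (-1:ℚ)^m * stirling1 n m * stirling2 m r)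
    = if n = r then (-1:ℚ)^n else 0
  | 0, 0 => by simp [stirling1, stirling2]
  | 0, r+1 => by simp [stirling1, stirling2]
  | n+1, 0 => by
      rw [if_neg (by omega)]
      apply Finset.sum_eq_zero
      intro m hm
      cases m with
      | zero => simp [stirling1]
      | succ m => simp [stirling2]
  | n+1, r+1 => by
      have hg0 : ((-1:ℚ)^0 * stirling1 n 0 * stirling2 0 (r+1)) = 0 := by
        simp [stirling2]
      have hgtop : ((-1:ℚ)^(n+1) * stirling1 n (n+1) * stirling2 (n+1) (r+1)) = 0 := by
        rw [stirling1_lt n (n+1) (by omega)]; push_cast; ring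
      have key : (∑ m ∈ range (n+1),
            (-1:ℚ)^(m+1) * stirling1 n (m+1) * stirling2 (m+1) (r+1))
          = ∑ m ∈ range (n+1), (-1:ℚ)^m * stirling1 n m * stirling2 m (r+1) := by
        have h := Finset.sum_range_succ'
          (fun m => (-1:ℚ)^m * stirling1 n m * stirling2 m (r+1)) (n+1)
        rw [Finset.sum_range_succ
          (fun m => (-1:ℚ)^m * stirling1 n m * stirling2 m (r+1)) (n+1)] at h
        rw [hg0, hgtop, add_zero, add_zero] at h
        exact h.symm
      rw [Finset.sum_range_succ']
      have hf0 : ((-1:ℚ)^0 * stirling1 (n+1) 0 * stirling2 0 (r+1)) = 0 := by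
        simp [stirling1]
      rw [hf0, add_zero]
      have expand : ∀ m ∈ range (n+1),
          (-1:ℚ)^(m+1) * stirling1 (n+1) (m+1) * stirling2 (m+1) (r+1)
          = (n:ℚ) * ((-1:ℚ)^(m+1) * stirling1 n (m+1) * stirling2 (m+1) (r+1))
            + (-((r:ℚ)+1)) * ((-1:ℚ)^m * stirling1 n m * stirling2 m (r+1))
            + (-1) * ((-1:ℚ)^m * stirling1 n m * stirling2 m r) := by
        intro m _
        have h1 : stirling1 (n+1) (m+1) = n * stirling1 n (m+1) + stirling1 n m := rfl
        have h2 : stirling2 (m+1) (r+1) = (r+1) * stirling2 m (r+1) + stirling2 m r := rfl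
        rw [h1, h2]
        push_cast
        ring
      rw [Finset.sum_congr rfl expand]
      rw [Finset.sum_add_distrib, Finset.sum_add_distrib,
        ← Finset.mul_sum, ← Finset.mul_sum, ← Finset.mul_sum]
      rw [key, Vlem n (r+1), Vlem n r]
      rcases eq_or_ne n r with h | h
      · subst h
        rw [if_neg (show ¬ (n = n+1) by omega), if_pos rfl, if_pos rfl]
        ring
      · rw [if_neg h, if_neg (show ¬ (n+1 = r+1) by omega)]
        rcases eq_or_ne n (r+1) with h2 | h2
        · rw [if_pos h2]; subst h2; push_cast; ring
        · rw [if_neg h2]; ring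

/-- The key sum identity. -/
lemma Tlem (j : ℕ) : ∀ k, j ≤ k →
    (∑ l ∈ Ico j (k+1), (-1:ℚ)^l * stirling1 (k+2) (l+2) * stirling2 (l+1) (j+1))
    = (-1:ℚ)^j * ((k+1).factorial : ℚ) / ((j+1).factorial : ℚ) := by
  intro k hk
  induction k, hk using Nat.le_induction with
  | base =>
    rw [Finset.sum_Ico_succ_top (le_refl j), Finset.Ico_self, Finset.sum_empty, zero_add]
    rw [stirling1_self, stirling2_self]
    have : ((j+1).factorial : ℚ) ≠ 0 := Nat.cast_ne_zero.2 (Nat.factorial_ne_zero _)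
    field_simp
    norm_num
  | succ k hk IH =>
    have hB : (∑ l ∈ range (k+2),
        (-1:ℚ)^l * stirling1 (k+2) (l+1) * stirling2 (l+1) (j+1)) = 0 := by
      have hV := Vlem (k+2) (j+1)
      rw [if_neg (by omega)] at hV
      rw [Finset.sum_range_succ'
        (fun m => (-1:ℚ)^m * stirling1 (k+2) m * stirling2 m (j+1)) (k+2)] at hV
      have h0 : ((-1:ℚ)^0 * stirling1 (k+2) 0 * stirling2 0 (j+1)) = 0 := by
        simp [stirling1]
      rw [h0, add_zero] at hV
      have hneg : ∀ m ∈ range (k+2),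
          (-1:ℚ)^m * stirling1 (k+2) (m+1) * stirling2 (m+1) (j+1)
          = -((-1:ℚ)^(m+1) * stirling1 (k+2) (m+1) * stirling2 (m+1) (j+1)) := by
        intro m _; ring
      rw [Finset.sum_congr rfl hneg, Finset.sum_neg_distrib, hV, neg_zero]
    have hBI : (∑ l ∈ Ico j (k+2),
        (-1:ℚ)^l * stirling1 (k+2) (l+1) * stirling2 (l+1) (j+1)) = 0 := by
      rw [← hB, Finset.range_eq_Ico]
      apply Finset.sum_subset (Finset.Ico_subset_Ico (by omega) le_rfl)
      intro l hl hnl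
      simp only [Finset.mem_Ico] at hl hnl
      rw [stirling2_lt (l+1) (j+1) (by omega)]
      push_cast
      ring
    have expand : ∀ l ∈ Ico j (k+1+1),
        (-1:ℚ)^l * stirling1 (k+1+2) (l+2) * stirling2 (l+1) (j+1)
        = ((k:ℚ)+2) * ((-1:ℚ)^l * stirling1 (k+2) (l+2) * stirling2 (l+1) (j+1))
          + ((-1:ℚ)^l * stirling1 (k+2) (l+1) * stirling2 (l+1) (j+1)) := by
      intro l _
      have h1 : stirling1 (k+1+2) (l+2) = (k+2) * stirling1 (k+2) (l+2) + stirling1 (k+2) (l+1) := rfl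
      rw [h1]
      push_cast
      ring
    rw [Finset.sum_congr rfl expand, Finset.sum_add_distrib, ← Finset.mul_sum]
    rw [show j = j from rfl] at hBI
    rw [hBI, add_zero]
    rw [Finset.sum_Ico_succ_top (by omega : j ≤ k+1)]
    have htop : ((-1:ℚ)^(k+1) * stirling1 (k+2) (k+1+2) * stirling2 (k+1+1) (j+1)) = 0 := by
      rw [stirling1_lt (k+2) (k+1+2) (by omega)]
      push_cast; ring
    rw [htop, add_zero, IH]
    have hfac : ((k+1+1).factorial : ℚ) = ((k:ℚ)+2) * ((k+1).factorial : ℚ) := by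
      rw [Nat.factorial_succ]; push_cast; ring
    rw [hfac]
    ring

lemma swaplem {M : Type*} [AddCommMonoid M] (n : ℕ) (f : ℕ → ℕ → M) :
    (∑ l ∈ range n, ∑ j ∈ range (l+1), f l j) = ∑ j ∈ range n, ∑ l ∈ Ico j n, f l j := by
  simp only [Finset.range_eq_Ico]
  exact (Finset.sum_Ico_Ico_comm 0 n fun a b => f b a).symm

theorem stmt18 (k : ℕ) (x : ℚ) :
    x * callanNeg k (-x) =
      ∑ j ∈ Finset.range (k + 1),
        (-1 : ℚ) ^ (j + 1) * (∏ i ∈ Finset.range (j + 1), (-x + i)) *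
          stirling2 (k + 1) (j + 1) / (j + 1) := by
  have hmin : ∀ l ∈ range (k+1), callan k l (-x) =
      ∑ j ∈ range (l+1), ((j.factorial:ℚ) * (∏ i ∈ range j, (-x + 1 + i)) *
        stirling2 (k+1) (j+1) * stirling2 (l+1) (j+1)) := by
    intro l hl
    simp only [Finset.mem_range] at hl
    rw [callan, min_eq_right (by omega : l ≤ k)]
  have step1 : x * callanNeg k (-x)
      = ∑ l ∈ range (k+1), ∑ j ∈ range (l+1),
          x * (1 / ((k + 1).factorial : ℚ)) * ((-1:ℚ)^l * stirling1 (k+2) (l+2)) *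
            ((j.factorial : ℚ) * (∏ i ∈ range j, (-x + 1 + i)) *
              stirling2 (k+1) (j+1) * stirling2 (l+1) (j+1)) := by
    rw [callanNeg]
    simp only [Finset.mul_sum]
    refine Finset.sum_congr rfl fun l hl => ?_
    rw [hmin l hl]
    simp only [Finset.mul_sum]
    refine Finset.sum_congr rfl fun i hi => ?_
    ring
  have step2 : (∑ l ∈ range (k+1), ∑ j ∈ range (l+1),
          x * (1 / ((k + 1).factorial : ℚ)) * ((-1:ℚ)^l * stirling1 (k+2) (l+2)) *
            ((j.factorial : ℚ) * (∏ i ∈ range j, (-x + 1 + i)) *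
              stirling2 (k+1) (j+1) * stirling2 (l+1) (j+1)))
      = ∑ j ∈ range (k+1), ∑ l ∈ Ico j (k+1),
          x * (1 / ((k + 1).factorial : ℚ)) * ((-1:ℚ)^l * stirling1 (k+2) (l+2)) *
            ((j.factorial : ℚ) * (∏ i ∈ range j, (-x + 1 + i)) *
              stirling2 (k+1) (j+1) * stirling2 (l+1) (j+1)) := by
    exact swaplem (k+1) fun l j =>
      x * (1 / ((k + 1).factorial : ℚ)) * ((-1:ℚ)^l * stirling1 (k+2) (l+2)) *
        ((j.factorial : ℚ) * (∏ i ∈ range j, (-x + 1 + i)) *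
          stirling2 (k+1) (j+1) * stirling2 (l+1) (j+1))
  rw [step1, step2]
  refine Finset.sum_congr rfl fun j hj => ?_
  simp only [Finset.mem_range] at hj
  have hjk : j ≤ k := by omega
  have hT := Tlem j k hjk
  have hfactor : (∑ l ∈ Ico j (k+1),
        x * (1 / ((k + 1).factorial : ℚ)) * ((-1:ℚ)^l * stirling1 (k+2) (l+2)) *
          ((j.factorial : ℚ) * (∏ i ∈ range j, (-x + 1 + i)) *
            stirling2 (k+1) (j+1) * stirling2 (l+1) (j+1)))
      = (x * (1 / ((k + 1).factorial : ℚ)) * ((j.factorial : ℚ) *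
          (∏ i ∈ range j, (-x + 1 + i)) * stirling2 (k+1) (j+1)))
        * ∑ l ∈ Ico j (k+1), ((-1:ℚ)^l * stirling1 (k+2) (l+2) * stirling2 (l+1) (j+1)) := by
    rw [Finset.mul_sum]
    exact Finset.sum_congr rfl fun l _ => by ring
  rw [hfactor, hT]
  have hprod : (∏ i ∈ range (j+1), (-x + (i:ℕ))) = (∏ i ∈ range j, (-x + 1 + (i:ℕ))) * (-x) := by
    rw [Finset.prod_range_succ']
    congr 1
    · exact Finset.prod_congr rfl fun i _ => by push_cast; ring
    · push_cast; ring
  rw [hprod]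
  have h1 : ((k+1).factorial : ℚ) ≠ 0 := Nat.cast_ne_zero.2 (Nat.factorial_ne_zero _)
  have h2 : ((j:ℚ)+1) ≠ 0 := by positivity
  have h3 : ((j).factorial : ℚ) ≠ 0 := Nat.cast_ne_zero.2 (Nat.factorial_ne_zero _)
  have hfac : ((j+1).factorial : ℚ) = ((j:ℚ)+1) * ((j).factorial : ℚ) := by
    rw [Nat.factorial_succ]; push_cast; ring
  rw [hfac]
  field_simp
  ring
end
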